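/- arXiv:1707.09429 — 2 statements merged into one kernel-verified Lean document; each statement's English description precedes it below -/
import Mathlib

section
/- Suppose Assumption AC holds: there exist sos polynomials a_0, a_1,…,a_r, b_1,…,b_t and R > 0 with R − ‖[x]_d‖² = a_0 + ∑_i a_i f_i + ∑_j b_j h_j identically, deg(a_i f_i) ≤ 2d and deg(b_j h_j) ≤ 2d. Fix k ≥ d and a vector ξ ∈ ℝ^{ℕ^n_{2d}}. If the feasible set of the order-k moment relaxation is nonempty (i.e., some y ∈ ℝ^{ℕ^n_{2k}} satisfies y_0 = 1, L_1^{(k)}[y] ⪰ 0, L_{f_i}^{(k)}[y] ⪰ 0 for all i, L_{h_j}^{(k)}[y] ⪰ 0 for all j), then the semidefinite program minimizing ∑_{|β|≤d} y_{2β} + ∑_{|α|≤2d} ξ_α y_α over this feasible set attains its minimum at some feasible y*. -/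
open MvPolynomial Finsupp

noncomputable section

/-- The total degree `|α|` of a multi-index `α ∈ ℕ^n`. -/
def mdeg {n : ℕ} (α : Fin n →₀ ℕ) : ℕ := ∑ i, α i

/-- `⌈m/2⌉` for a natural number `m`. -/
def halfCeil (m : ℕ) : ℕ := (m + 1) / 2

/-- The Riesz functional `R_y(f) = ∑_γ f_γ y_γ`. -/
def Riesz {n : ℕ} (y : (Fin n →₀ ℕ) → ℝ) (f : MvPolynomial (Fin n) ℝ) : ℝ :=
  ∑ γ ∈ f.support, f.coeff γ * y γ

/-- The `k`-th localizing matrix `L_f^{(k)}[y]`, indexed by multi-indices; its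
`(α,β)` entry is `∑_γ f_γ y_{α+β+γ}` when `|α|,|β| ≤ s := k - ⌈deg f / 2⌉` (and `0` otherwise). -/
def locMat {n : ℕ} (k : ℕ) (f : MvPolynomial (Fin n) ℝ) (y : (Fin n →₀ ℕ) → ℝ) :
    Matrix (Fin n →₀ ℕ) (Fin n →₀ ℕ) ℝ := fun α β =>
  if mdeg α ≤ k - halfCeil f.totalDegree ∧ mdeg β ≤ k - halfCeil f.totalDegree then
    ∑ γ ∈ f.support, f.coeff γ * y (α + β + γ)
  else 0

/-- Positive semidefiniteness of a (block-finitely supported) matrix indexed by multi-indices: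
symmetry together with nonnegativity of the quadratic form on all finitely supported vectors. -/
def IsPSD {n : ℕ} (M : Matrix (Fin n →₀ ℕ) (Fin n →₀ ℕ) ℝ) : Prop :=
  (∀ α β, M α β = M β α) ∧
  ∀ v : (Fin n →₀ ℕ) →₀ ℝ, 0 ≤ ∑ α ∈ v.support, ∑ β ∈ v.support, v α * M α β * v β

/-- The evaluation `u^α` of a monomial with multi-index `α` at a point `u`. -/
def monoEval {n : ℕ} (u : Fin n → ℝ) (α : Fin n →₀ ℕ) : ℝ := ∏ i, u i ^ α i

/-- The finite set of multi-indices `α ∈ ℕ^n` with `|α| ≤ D`. -/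
def degLE (n D : ℕ) : Finset (Fin n →₀ ℕ) :=
  (Finset.Iic (Finsupp.equivFunOnFinite.symm fun _ : Fin n => D)).filter fun α => mdeg α ≤ D

end

/-- A sum-of-squares (sos) polynomial. -/
def IsSos {n : ℕ} (σ : MvPolynomial (Fin n) ℝ) : Prop :=
  ∃ (L : ℕ) (p : Fin L → MvPolynomial (Fin n) ℝ), σ = ∑ l, p l ^ 2

/-- The polynomial `‖[x]_D‖² = ∑_{|β| ≤ D} x^{2β}`. -/
noncomputable def monVecSq (n D : ℕ) : MvPolynomial (Fin n) ℝ :=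
  ∑ β ∈ degLE n D, (MvPolynomial.monomial β (1 : ℝ)) ^ 2

section AuxLemmas
variable {n : ℕ}

lemma mdeg_sum (α : Fin n →₀ ℕ) : (α.sum fun _ e => e) = mdeg α := by
  rw [Finsupp.sum_fintype]; · rfl
  · intro; rfl

lemma mdeg_degree (α : Fin n →₀ ℕ) : α.degree = mdeg α := by
  rw [show α.degree = α.sum fun _ e => e by simp [Finsupp.degree, Finsupp.sum]; rfl, mdeg_sum]

lemma mdeg_add (α β : Fin n →₀ ℕ) : mdeg (α + β) = mdeg α + mdeg β := by
  simp [mdeg, Finsupp.add_apply, Finset.sum_add_distrib]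

lemma mdeg_zero' : mdeg (0 : Fin n →₀ ℕ) = 0 := by simp [mdeg]

lemma mdeg_eq_zero {α : Fin n →₀ ℕ} (h : mdeg α = 0) : α = 0 := by
  ext i
  have := Finset.sum_eq_zero_iff.1 h i (Finset.mem_univ i)
  simpa using this

lemma mdeg_le_totalDegree {p : MvPolynomial (Fin n) ℝ} {α : Fin n →₀ ℕ}
    (h : α ∈ p.support) : mdeg α ≤ p.totalDegree := by
  rw [← mdeg_sum]; exact MvPolynomial.le_totalDegree h

lemma exists_top (p : MvPolynomial (Fin n) ℝ) (hp : p ≠ 0) :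
    ∃ μ ∈ p.support, mdeg μ = p.totalDegree := by
  obtain ⟨μ, hμ, hd⟩ := Finset.exists_mem_eq_sup p.support
    (MvPolynomial.support_nonempty.2 hp) (fun s : Fin n →₀ ℕ => s.sum fun _ e => e)
  exact ⟨μ, hμ, by rw [← mdeg_sum]; exact hd.symm⟩

lemma topComponent_ne_zero {p : MvPolynomial (Fin n) ℝ} (hp : p ≠ 0) :
    homogeneousComponent p.totalDegree p ≠ 0 := by
  obtain ⟨μ, hμ, hd⟩ := exists_top p hp
  intro h0
  have h2 := coeff_homogeneousComponent (σ := Fin n) (R := ℝ) p.totalDegree p μ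
  rw [h0] at h2
  simp only [coeff_zero] at h2
  rw [if_pos (by rw [mdeg_degree]; exact hd)] at h2
  exact (MvPolynomial.mem_support_iff.1 hμ) h2.symm

/-- Riesz functional is additive. -/
lemma Riesz_add (y : (Fin n →₀ ℕ) → ℝ) (f g : MvPolynomial (Fin n) ℝ) :
    Riesz y (f + g) = Riesz y f + Riesz y g := by
  have key : ∀ h : MvPolynomial (Fin n) ℝ, h.support ⊆ f.support ∪ g.support →
      Riesz y h = ∑ γ ∈ f.support ∪ g.support, h.coeff γ * y γ := by
    intro h hsub
    exact Finset.sum_subset hsub (by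
      intro x _ hx
      rw [MvPolynomial.notMem_support_iff.1 hx, zero_mul])
  rw [key (f + g) (MvPolynomial.support_add), key f Finset.subset_union_left,
    key g Finset.subset_union_right, ← Finset.sum_add_distrib]
  refine Finset.sum_congr rfl fun γ _ => ?_
  rw [MvPolynomial.coeff_add]; ring

@[simp] lemma Riesz_zero (y : (Fin n →₀ ℕ) → ℝ) : Riesz y 0 = 0 := by
  simp [Riesz]

/-- Riesz as an additive monoid hom. -/
noncomputable def RieszHom (y : (Fin n →₀ ℕ) → ℝ) : MvPolynomial (Fin n) ℝ →+ ℝ :=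
  AddMonoidHom.mk' (Riesz y) (Riesz_add y)

lemma Riesz_monomial (y : (Fin n →₀ ℕ) → ℝ) (μ : Fin n →₀ ℕ) (c : ℝ) :
    Riesz y (monomial μ c) = c * y μ := by
  classical
  rcases eq_or_ne c 0 with rfl | hc
  · simp [Riesz]
  · rw [Riesz]
    rw [MvPolynomial.support_monomial, if_neg hc, Finset.sum_singleton, MvPolynomial.coeff_monomial,
      if_pos rfl]

lemma Riesz_sum {ι : Type*} (y : (Fin n →₀ ℕ) → ℝ) (s : Finset ι) (g : ι → MvPolynomial (Fin n) ℝ) :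
    Riesz y (∑ i ∈ s, g i) = ∑ i ∈ s, Riesz y (g i) :=
  map_sum (RieszHom y) g s

lemma Riesz_sub (y : (Fin n →₀ ℕ) → ℝ) (f g : MvPolynomial (Fin n) ℝ) :
    Riesz y (f - g) = Riesz y f - Riesz y g :=
  map_sub (RieszHom y) f g

/-- trilinear expansion of the Riesz functional. -/
lemma Riesz_mul3 (y : (Fin n →₀ ℕ) → ℝ) (p q f : MvPolynomial (Fin n) ℝ) :
    Riesz y (p * q * f) = ∑ α ∈ p.support, ∑ β ∈ q.support, ∑ γ ∈ f.support,
      p.coeff α * q.coeff β * f.coeff γ * y (α + β + γ) := by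
  conv_lhs => rw [← support_sum_monomial_coeff p, ← support_sum_monomial_coeff q,
    ← support_sum_monomial_coeff f]
  simp only [Finset.sum_mul, Finset.mul_sum, monomial_mul, Riesz_sum, Riesz_monomial]
  rw [Finset.sum_comm]
  refine Eq.trans (Finset.sum_congr rfl fun β _ => Finset.sum_comm) ?_
  exact Finset.sum_comm

/-- coefficients at total degree `a + b` of a product only see top components. -/
lemma coeff_mul_top {p q : MvPolynomial (Fin n) ℝ} {a b : ℕ}
    (hp : p.totalDegree ≤ a) (hq : q.totalDegree ≤ b) {μ : Fin n →₀ ℕ}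
    (hμ : mdeg μ = a + b) :
    coeff μ (p * q) = coeff μ (homogeneousComponent a p * homogeneousComponent b q) := by
  classical
  rw [coeff_mul, coeff_mul]
  refine Finset.sum_congr rfl fun x hx => ?_
  have hadd : x.1 + x.2 = μ := Finset.HasAntidiagonal.mem_antidiagonal.1 hx
  have hsum : mdeg x.1 + mdeg x.2 = a + b := by rw [← mdeg_add, hadd, hμ]
  rcases lt_trichotomy (mdeg x.1) a with h1 | h1 | h1
  · have h2 : b < mdeg x.2 := by omega
    have hc : coeff x.2 q = 0 := by
      apply coeff_eq_zero_of_totalDegree_lt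
      rw [show (∑ i ∈ x.2.support, x.2 i) = mdeg x.2 from by
        rw [← mdeg_degree]; rfl]
      omega
    have hc' : coeff x.2 (homogeneousComponent b q) = 0 := by
      rw [coeff_homogeneousComponent, if_neg]; rw [mdeg_degree]; omega
    rw [hc, hc', mul_zero, mul_zero]
  · have h2 : mdeg x.2 = b := by omega
    rw [coeff_homogeneousComponent, coeff_homogeneousComponent,
      if_pos (by rw [mdeg_degree]; omega), if_pos (by rw [mdeg_degree]; omega)]
  · have hc : coeff x.1 p = 0 := by
      apply coeff_eq_zero_of_totalDegree_lt
      rw [show (∑ i ∈ x.1.support, x.1 i) = mdeg x.1 from by rw [← mdeg_degree]; rfl]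
      omega
    have hc' : coeff x.1 (homogeneousComponent a p) = 0 := by
      rw [coeff_homogeneousComponent, if_neg]; rw [mdeg_degree]; omega
    rw [hc, hc', zero_mul, zero_mul]

/-- total degree is additive on products of nonzero real polynomials. -/
lemma totalDegree_mul_eq {p q : MvPolynomial (Fin n) ℝ} (hp : p ≠ 0) (hq : q ≠ 0) :
    (p * q).totalDegree = p.totalDegree + q.totalDegree := by
  refine le_antisymm (totalDegree_mul p q) ?_
  set hp' := homogeneousComponent p.totalDegree p with hhp
  set hq' := homogeneousComponent q.totalDegree q with hhq
  have hne : hp' * hq' ≠ 0 :=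
    mul_ne_zero (topComponent_ne_zero hp) (topComponent_ne_zero hq)
  have hhom : (hp' * hq').IsHomogeneous (p.totalDegree + q.totalDegree) :=
    (homogeneousComponent_isHomogeneous p.totalDegree p).mul
      (homogeneousComponent_isHomogeneous q.totalDegree q)
  obtain ⟨μ, hμ⟩ := MvPolynomial.ne_zero_iff.1 hne
  have hdeg : mdeg μ = p.totalDegree + q.totalDegree := by
    rw [← mdeg_degree, Finsupp.degree_eq_weight_one]; exact hhom hμ
  have : coeff μ (p * q) ≠ 0 := by
    rw [coeff_mul_top le_rfl le_rfl hdeg]; exact hμ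
  calc p.totalDegree + q.totalDegree = mdeg μ := hdeg.symm
    _ ≤ (p * q).totalDegree := by
        rw [← mdeg_sum]; exact le_totalDegree (MvPolynomial.mem_support_iff.2 this)

/-- each summand of a sum of squares has degree at most half the total. -/
lemma sos_summand_degree {L : ℕ} (p : Fin L → MvPolynomial (Fin n) ℝ) (l : Fin L) :
    2 * (p l).totalDegree ≤ (∑ l', p l' ^ 2).totalDegree := by
  classical
  set M := Finset.univ.sup fun l' => (p l').totalDegree with hM
  rcases Nat.eq_zero_or_pos M with hM0 | hMpos
  · have h1 : (p l).totalDegree ≤ M :=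
      Finset.le_sup (f := fun l' => (p l').totalDegree) (Finset.mem_univ l)
    omega
  -- pick an achiever of the max, necessarily nonzero
  obtain ⟨l₀, -, hl₀⟩ := Finset.exists_mem_eq_sup Finset.univ
    (Finset.univ_nonempty_iff.2 ⟨l⟩) fun l' => (p l').totalDegree
  have hpl₀ : p l₀ ≠ 0 := by
    intro h0
    apply Nat.lt_irrefl 0
    calc 0 < M := hMpos
      _ = (p l₀).totalDegree := hl₀
      _ = 0 := by rw [h0, totalDegree_zero]
  -- top components
  set q := fun l' => homogeneousComponent M (p l') with hq
  have hq0 : q l₀ ≠ 0 := by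
    rw [hq]; simpa [← hl₀] using topComponent_ne_zero hpl₀
  have hqsum : (∑ l', (q l') ^ 2) ≠ 0 := by
    intro h0
    obtain ⟨x, hx⟩ : ∃ x : Fin n → ℝ, eval x (q l₀) ≠ 0 := by
      by_contra hall
      push_neg at hall
      exact hq0 (MvPolynomial.funext fun x => by simpa using hall x)
    have := congrArg (eval x) h0
    simp only [map_sum, map_pow, eval_zero] at this
    have hle : (eval x (q l₀)) ^ 2 ≤ ∑ l', (eval x (q l')) ^ 2 :=
      Finset.single_le_sum (f := fun l' => (eval x (q l')) ^ 2)
        (fun i _ => sq_nonneg _) (Finset.mem_univ l₀)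
    have h2 : (eval x (q l₀)) ^ 2 = 0 := le_antisymm (le_of_le_of_eq hle this) (sq_nonneg _)
    exact hx ((pow_eq_zero_iff two_ne_zero).1 h2)
  have hhom : (∑ l', (q l') ^ 2).IsHomogeneous (2 * M) := by
    rw [← mem_homogeneousSubmodule]
    apply Submodule.sum_mem
    intro l' _
    rw [mem_homogeneousSubmodule]
    have := (homogeneousComponent_isHomogeneous M (p l')).mul
      (homogeneousComponent_isHomogeneous M (p l'))
    simpa [sq, two_mul] using this
  obtain ⟨μ, hμ⟩ := MvPolynomial.ne_zero_iff.1 hqsum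
  have hdeg : mdeg μ = 2 * M := by
    rw [← mdeg_degree, Finsupp.degree_eq_weight_one]; exact hhom hμ
  -- coefficient of σ at μ agrees with that of the top square sum
  have hcoeff : coeff μ (∑ l', (p l') ^ 2) = coeff μ (∑ l', (q l') ^ 2) := by
    rw [MvPolynomial.coeff_sum, MvPolynomial.coeff_sum]
    refine Finset.sum_congr rfl fun l' _ => ?_
    have h1 : (p l').totalDegree ≤ M :=
      Finset.le_sup (f := fun l' => (p l').totalDegree) (Finset.mem_univ l')
    rw [sq, sq]
    exact coeff_mul_top h1 h1 (by omega)
  have hne : coeff μ (∑ l', (p l') ^ 2) ≠ 0 := by rw [hcoeff]; exact hμ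
  have h2M : 2 * M ≤ (∑ l', (p l') ^ 2).totalDegree := by
    rw [← hdeg, ← mdeg_sum]
    exact le_totalDegree (MvPolynomial.mem_support_iff.2 hne)
  have : (p l).totalDegree ≤ M :=
    Finset.le_sup (f := fun l' => (p l').totalDegree) (Finset.mem_univ l)
  omega

lemma mem_degLE {D : ℕ} {α : Fin n →₀ ℕ} : α ∈ degLE n D ↔ mdeg α ≤ D := by
  unfold degLE
  rw [Finset.mem_filter]
  constructor
  · exact fun h => h.2
  · intro h
    refine ⟨Finset.mem_Iic.2 ?_, h⟩
    intro i
    simp only [Finsupp.coe_equivFunOnFinite_symm]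
    calc α i ≤ mdeg α := Finset.single_le_sum (f := fun j => α j)
          (fun _ _ => Nat.zero_le _) (Finset.mem_univ i)
      _ ≤ D := h

lemma exists_le_mdeg (α : Fin n →₀ ℕ) (c : ℕ) (hc : c ≤ mdeg α) :
    ∃ β : Fin n →₀ ℕ, β ≤ α ∧ mdeg β = c := by
  induction c with
  | zero => exact ⟨0, zero_le, mdeg_zero'⟩
  | succ c ih =>
    obtain ⟨β, hβα, hβ⟩ := ih (Nat.le_of_succ_le hc)
    have : ∃ i, β i < α i := by
      by_contra hall
      push_neg at hall
      have : mdeg α ≤ mdeg β := Finset.sum_le_sum fun i _ => hall i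
      omega
    obtain ⟨i, hi⟩ := this
    refine ⟨β + Finsupp.single i 1, ?_, ?_⟩
    · intro j
      rcases eq_or_ne j i with rfl | hji
      · simpa [Finsupp.single_apply] using hi
      · simpa [Finsupp.single_apply, Ne.symm hji] using hβα j
    · rw [mdeg_add, hβ]
      have : mdeg (Finsupp.single i 1) = 1 := by
        simp [mdeg, Finsupp.single_apply]
      omega

/-- the key positivity: PSD localizing matrix yields nonneg Riesz values on `p²·f`. -/
lemma psd_riesz {k : ℕ} {f : MvPolynomial (Fin n) ℝ} {y : (Fin n →₀ ℕ) → ℝ}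
    (hM : IsPSD (locMat k f y)) (p : MvPolynomial (Fin n) ℝ)
    (hp : p.totalDegree ≤ k - halfCeil f.totalDegree) :
    0 ≤ Riesz y (p * p * f) := by
  classical
  set v : (Fin n →₀ ℕ) →₀ ℝ := Finsupp.onFinset p.support (fun α => coeff α p)
    (fun a ha => MvPolynomial.mem_support_iff.2 ha) with hv
  have hsupp : v.support = p.support := by
    ext α
    simp [hv, Finsupp.mem_support_iff, MvPolynomial.mem_support_iff]
  have h := hM.2 v
  rw [hsupp] at h
  rw [Riesz_mul3]
  refine le_trans h (le_of_eq ?_)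
  refine Finset.sum_congr rfl fun α hα => Finset.sum_congr rfl fun β hβ => ?_
  have hb : ∀ γ ∈ p.support, mdeg γ ≤ k - halfCeil f.totalDegree :=
    fun γ hγ => le_trans (mdeg_le_totalDegree hγ) hp
  rw [show locMat k f y α β = ∑ γ ∈ f.support, f.coeff γ * y (α + β + γ) from by
    unfold locMat; rw [if_pos ⟨hb α hα, hb β hβ⟩]]
  have hvα : v α = coeff α p := rfl
  have hvβ : v β = coeff β p := rfl
  rw [hvα, hvβ, Finset.mul_sum, Finset.sum_mul]
  refine Finset.sum_congr rfl fun γ _ => by ring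

lemma riesz_sq_one {k : ℕ} {y : (Fin n →₀ ℕ) → ℝ}
    (hM : IsPSD (locMat k (1 : MvPolynomial (Fin n) ℝ) y)) (p : MvPolynomial (Fin n) ℝ)
    (hp : p.totalDegree ≤ k) : 0 ≤ Riesz y (p * p) := by
  have h0 : (1 : MvPolynomial (Fin n) ℝ).totalDegree = 0 := totalDegree_one
  have := psd_riesz hM p (by rw [h0]; simpa [halfCeil] using hp)
  rwa [mul_one] at this

lemma diag_nonneg {k : ℕ} {y : (Fin n →₀ ℕ) → ℝ}
    (hM : IsPSD (locMat k (1 : MvPolynomial (Fin n) ℝ) y))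
    (α : Fin n →₀ ℕ) (hα : mdeg α ≤ k) : 0 ≤ y (α + α) := by
  have h := riesz_sq_one hM (monomial α 1) (by
    rw [totalDegree_monomial α one_ne_zero, mdeg_sum]; exact hα)
  rwa [monomial_mul, Riesz_monomial, one_mul, one_mul] at h

lemma offdiag_bound {k : ℕ} {y : (Fin n →₀ ℕ) → ℝ}
    (hM : IsPSD (locMat k (1 : MvPolynomial (Fin n) ℝ) y))
    (α β : Fin n →₀ ℕ) (hα : mdeg α ≤ k) (hβ : mdeg β ≤ k) :
    2 * |y (α + β)| ≤ y (α + α) + y (β + β) := by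
  have key : ∀ c : ℝ, c = 1 ∨ c = -1 →
      0 ≤ y (α + α) + 2 * c * y (α + β) + y (β + β) := by
    intro c hc
    have hcne : c ≠ 0 := by rcases hc with rfl | rfl <;> norm_num
    set p := monomial α (1:ℝ) + monomial β c with hp
    have hdeg : p.totalDegree ≤ k := by
      refine le_trans (totalDegree_add _ _) (max_le ?_ ?_)
      · rw [totalDegree_monomial α one_ne_zero, mdeg_sum]; exact hα
      · rw [totalDegree_monomial β hcne, mdeg_sum]; exact hβ
    have h := riesz_sq_one hM p hdeg
    have hexp : p * p = monomial (α + α) 1 + (monomial (α + β) c +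
        (monomial (β + α) c + monomial (β + β) (c * c))) := by
      rw [hp, add_mul, mul_add, mul_add, monomial_mul, monomial_mul, monomial_mul, monomial_mul]
      ring_nf
    rw [hexp, Riesz_add, Riesz_add, Riesz_add, Riesz_monomial, Riesz_monomial,
      Riesz_monomial, Riesz_monomial] at h
    have hcc : c * c = 1 := by rcases hc with rfl | rfl <;> norm_num
    rw [hcc] at h
    rw [show β + α = α + β from add_comm β α] at h
    nlinarith [h]
  have h1 := key 1 (Or.inl rfl)
  have h2 := key (-1) (Or.inr rfl)
  rcases abs_cases (y (α + β)) with ⟨he, _⟩ | ⟨he, _⟩ <;> rw [he] <;> nlinarith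

/-- main moment bound. -/
lemma moment_bound {k d : ℕ} (hkd : d ≤ k) (hd1 : 1 ≤ d) {Rv : ℝ} (hRv : 0 < Rv)
    {y : (Fin n →₀ ℕ) → ℝ} (hy0 : y 0 = 1)
    (hM : IsPSD (locMat k (1 : MvPolynomial (Fin n) ℝ) y))
    (hstep : ∀ δ : Fin n →₀ ℕ, mdeg δ + d ≤ k →
      ∑ β ∈ degLE n d, y (β + β + (δ + δ)) ≤ Rv * y (δ + δ)) :
    ∀ μ : Fin n →₀ ℕ, mdeg μ ≤ 2 * k → |y μ| ≤ (max 1 Rv) ^ (k + 1) := by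
  set B := (max 1 Rv) ^ (k + 1) with hB
  have hb1 : (1:ℝ) ≤ max 1 Rv := le_max_left _ _
  have hB1 : (1:ℝ) ≤ B := one_le_pow₀ hb1
  -- diagonal bound by strong induction on the degree
  have hdiag : ∀ N : ℕ, ∀ α : Fin n →₀ ℕ, mdeg α = N → mdeg α ≤ k →
      y (α + α) ≤ (max 1 Rv) ^ (N + 1) := by
    intro N
    induction N using Nat.strong_induction_on with
    | _ N ih =>
      intro α hαN hαk
      by_cases hcase : mdeg α ≤ d
      · -- direct from hstep with δ = 0
        have h0 := hstep 0 (by rw [mdeg_zero']; omega)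
        have hmem : α ∈ degLE n d := mem_degLE.2 hcase
        have hterm : y (α + α) ≤ ∑ β ∈ degLE n d, y (β + β + (0 + 0)) := by
          have := Finset.single_le_sum (f := fun β => y (β + β + (0 + 0)))
            (fun β hβ => by
              have hβd : mdeg β ≤ d := mem_degLE.1 hβ
              have := diag_nonneg hM (β + 0) (by rw [mdeg_add, mdeg_zero']; omega)
              simpa [add_zero] using this) hmem
          simpa [add_zero] using this
        have : y (α + α) ≤ Rv * y (0 + 0) := le_trans hterm (h0)
        rw [show (0:Fin n →₀ ℕ) + 0 = 0 from add_zero 0, hy0, mul_one] at this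
        calc y (α + α) ≤ Rv := this
          _ ≤ max 1 Rv := le_max_right _ _
          _ ≤ (max 1 Rv) ^ (N + 1) := le_self_pow₀ hb1 (Nat.succ_ne_zero N)
      · -- peel off a chunk of degree d
        push_neg at hcase
        obtain ⟨β, hβα, hβd⟩ := exists_le_mdeg α d (le_of_lt hcase)
        set δ := α - β with hδ
        have hsplit : β + δ = α := add_tsub_cancel_of_le hβα
        have hδdeg : mdeg δ = N - d := by
          have := mdeg_add β δ
          rw [hsplit] at this
          omega
        have hδk : mdeg δ + d ≤ k := by omega
        have h0 := hstep δ hδk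
        have hmem : β ∈ degLE n d := mem_degLE.2 (le_of_eq hβd)
        have hterm : y (β + β + (δ + δ)) ≤ ∑ β' ∈ degLE n d, y (β' + β' + (δ + δ)) :=
          Finset.single_le_sum (f := fun β' => y (β' + β' + (δ + δ)))
            (fun β' hβ' => by
              have hβ'd : mdeg β' ≤ d := mem_degLE.1 hβ'
              have h := diag_nonneg hM (β' + δ) (by rw [mdeg_add]; omega)
              simpa [add_add_add_comm] using h) hmem
        have hrw : β + β + (δ + δ) = α + α := by
          rw [add_add_add_comm, hsplit]
        rw [hrw] at hterm
        have hδnn : 0 ≤ y (δ + δ) := diag_nonneg hM δ (by omega)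
        have hih : y (δ + δ) ≤ (max 1 Rv) ^ (N - d + 1) :=
          ih (N - d) (by omega) δ hδdeg (by omega)
        calc y (α + α) ≤ Rv * y (δ + δ) := le_trans hterm h0
          _ ≤ (max 1 Rv) * (max 1 Rv) ^ (N - d + 1) := by
              apply mul_le_mul (le_max_right _ _) hih hδnn (by linarith)
          _ = (max 1 Rv) ^ (N - d + 2) := by ring
          _ ≤ (max 1 Rv) ^ (N + 1) := pow_le_pow_right₀ hb1 (by omega)
  have hdiagB : ∀ α : Fin n →₀ ℕ, mdeg α ≤ k → y (α + α) ≤ B := by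
    intro α hα
    calc y (α + α) ≤ (max 1 Rv) ^ (mdeg α + 1) := hdiag _ α rfl hα
      _ ≤ B := pow_le_pow_right₀ hb1 (by omega)
  intro μ hμ
  -- split μ = α + β with both halves of degree ≤ k
  obtain ⟨β, hβμ, hβdeg⟩ := exists_le_mdeg μ (min k (mdeg μ)) (min_le_right _ _)
  set α := μ - β with hα
  have hsplit : β + α = μ := add_tsub_cancel_of_le hβμ
  have hαdeg : mdeg α = mdeg μ - min k (mdeg μ) := by
    have := mdeg_add β α
    rw [hsplit] at this
    omega
  have hαk : mdeg α ≤ k := by omega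
  have hβk : mdeg β ≤ k := by omega
  have h2 := offdiag_bound hM β α hβk hαk
  rw [hsplit] at h2
  have hA := hdiagB β hβk
  have hB' := hdiagB α hαk
  linarith
/-- nonnegativity of each certificate term multiplied by an even monomial. -/
lemma term_nonneg {k d : ℕ} {f σ : MvPolynomial (Fin n) ℝ} {y : (Fin n →₀ ℕ) → ℝ}
    (hM : IsPSD (locMat k f y)) (hσ : IsSos σ)
    (hhc : halfCeil f.totalDegree ≤ d)
    (hdeg : (σ * f).totalDegree ≤ 2 * d)
    (δ : Fin n →₀ ℕ) (hδ : mdeg δ + d ≤ k) :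
    0 ≤ Riesz y (monomial (δ + δ) 1 * (σ * f)) := by
  rcases eq_or_ne σ 0 with rfl | hσ0
  · simp [Riesz_zero]
  rcases eq_or_ne f 0 with rfl | hf0
  · simp [Riesz_zero]
  obtain ⟨L, p, hp⟩ := hσ
  have hσdeg : σ.totalDegree + f.totalDegree ≤ 2 * d := by
    rw [← totalDegree_mul_eq hσ0 hf0]; exact hdeg
  have hpl : ∀ l, (p l).totalDegree + halfCeil f.totalDegree ≤ d := by
    intro l
    have h1 : 2 * (p l).totalDegree ≤ σ.totalDegree := by
      rw [hp]; exact sos_summand_degree p l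
    unfold halfCeil at *
    omega
  set u := monomial δ (1:ℝ) with hu
  have hmm : monomial (δ + δ) (1:ℝ) = u * u := by rw [hu, monomial_mul, one_mul]
  have hexp : monomial (δ + δ) (1:ℝ) * (σ * f) = ∑ l, (u * p l) * (u * p l) * f := by
    rw [hmm, hp, Finset.sum_mul, Finset.mul_sum]
    exact Finset.sum_congr rfl fun l _ => by ring
  rw [hexp, Riesz_sum]
  apply Finset.sum_nonneg
  intro l _
  apply psd_riesz hM
  have h1 : (u * p l).totalDegree ≤ mdeg δ + (p l).totalDegree := by
    refine le_trans (totalDegree_mul _ _) ?_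
    have : u.totalDegree = mdeg δ := by
      rw [hu, totalDegree_monomial δ one_ne_zero, mdeg_sum]
    omega
  have := hpl l
  omega

/-- Riesz value of the certificate LHS. -/
lemma cert_lhs {d : ℕ} (y : (Fin n →₀ ℕ) → ℝ) (Rv : ℝ) (δ : Fin n →₀ ℕ) :
    Riesz y (monomial (δ + δ) 1 * (C Rv - monVecSq n d)) =
      Rv * y (δ + δ) - ∑ β ∈ degLE n d, y (β + β + (δ + δ)) := by
  rw [mul_sub, Riesz_sub]
  congr 1
  · rw [C_apply, monomial_mul, Riesz_monomial, one_mul, add_zero]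
  · unfold monVecSq
    rw [Finset.mul_sum, Riesz_sum]
    refine Finset.sum_congr rfl fun β _ => ?_
    rw [sq, monomial_mul, monomial_mul, Riesz_monomial, one_mul, one_mul, one_mul]
    rw [show δ + δ + (β + β) = β + β + (δ + δ) from add_comm _ _]

lemma monVecSq_totalDegree (d : ℕ) : (monVecSq n d).totalDegree ≤ 2 * d := by
  unfold monVecSq
  apply totalDegree_finsetSum_le
  intro β hβ
  rw [sq, monomial_mul, one_mul]
  refine le_trans (totalDegree_monomial_le _ _) ?_
  rw [show ((β + β).sum fun _ => id) = mdeg (β + β) from mdeg_sum (β + β)]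
  rw [mdeg_add]
  have := mem_degLE.1 hβ
  omega


end AuxLemmas

/-- Under Assumption AC, fix `k ≥ d` and `ξ ∈ ℝ^{ℕ^n_{2d}}`. If the order-`k`
moment relaxation is feasible, then the SDP minimizing
`∑_{|β|≤d} y_{2β} + ∑_{|α|≤2d} ξ_α y_α` over its feasible set attains its minimum. -/
theorem moment_relaxation_attains_min {n m r t : ℕ}
    (f : Fin r → MvPolynomial (Fin n) ℝ) (g : Fin t → MvPolynomial (Fin m) ℝ)
    (A : Matrix (Fin m) (Fin n) ℝ)
    (h : Fin t → MvPolynomial (Fin n) ℝ)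
    (hh : ∀ j, h j = MvPolynomial.aeval
      (fun i : Fin m => ∑ l : Fin n, MvPolynomial.C (A i l) * MvPolynomial.X l) (g j))
    (d : ℕ)
    (hd : d = max (Finset.univ.sup fun i => halfCeil (f i).totalDegree)
                  (Finset.univ.sup fun j => halfCeil (h j).totalDegree))
    -- Assumption AC:
    (Rv : ℝ) (hR : 0 < Rv)
    (a₀ : MvPolynomial (Fin n) ℝ) (a : Fin r → MvPolynomial (Fin n) ℝ)
    (b : Fin t → MvPolynomial (Fin n) ℝ)
    (ha₀ : IsSos a₀) (ha : ∀ i, IsSos (a i)) (hb : ∀ j, IsSos (b j))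
    (hda : ∀ i, (a i * f i).totalDegree ≤ 2 * d)
    (hdb : ∀ j, (b j * h j).totalDegree ≤ 2 * d)
    (hcert : MvPolynomial.C Rv - monVecSq n d = a₀ + ∑ i, a i * f i + ∑ j, b j * h j)
    (k : ℕ) (hk : d ≤ k) (ξ : (Fin n →₀ ℕ) → ℝ)
    -- the feasible set and the objective of the order-k moment relaxation:
    (F : Set ((Fin n →₀ ℕ) → ℝ))
    (hF : F = {y | y 0 = 1 ∧
        IsPSD (locMat k (1 : MvPolynomial (Fin n) ℝ) y) ∧
        (∀ i, IsPSD (locMat k (f i) y)) ∧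
        (∀ j, IsPSD (locMat k (h j) y))})
    (obj : ((Fin n →₀ ℕ) → ℝ) → ℝ)
    (hobj : ∀ y, obj y = (∑ β ∈ degLE n d, y (β + β)) + ∑ α ∈ degLE n (2 * d), ξ α * y α)
    (hne : F.Nonempty) :
    ∃ ystar ∈ F, ∀ y ∈ F, obj ystar ≤ obj y := by
  classical
  -- degree comparisons
  have hcdf : ∀ i, halfCeil (f i).totalDegree ≤ d := by
    intro i
    rw [hd]
    exact le_trans (Finset.le_sup (f := fun i => halfCeil (f i).totalDegree)
      (Finset.mem_univ i)) (le_max_left _ _)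
  have hcdh : ∀ j, halfCeil (h j).totalDegree ≤ d := by
    intro j
    rw [hd]
    exact le_trans (Finset.le_sup (f := fun j => halfCeil (h j).totalDegree)
      (Finset.mem_univ j)) (le_max_right _ _)
  have hc1 : halfCeil (1 : MvPolynomial (Fin n) ℝ).totalDegree = 0 := by
    rw [totalDegree_one]; rfl
  -- truncation operator
  set T : ((Fin n →₀ ℕ) → ℝ) → ((Fin n →₀ ℕ) → ℝ) :=
    fun y μ => if mdeg μ ≤ 2 * k then y μ else 0 with hT
  have hagree : ∀ (y) (μ : Fin n →₀ ℕ), mdeg μ ≤ 2 * k → T y μ = y μ :=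
    fun y μ hμ => if_pos hμ
  have hlocT : ∀ (g' : MvPolynomial (Fin n) ℝ), halfCeil g'.totalDegree ≤ k →
      ∀ y, locMat k g' (T y) = locMat k g' y := by
    intro g' hg' y
    funext α β
    unfold locMat
    by_cases hcond : mdeg α ≤ k - halfCeil g'.totalDegree ∧
        mdeg β ≤ k - halfCeil g'.totalDegree
    · rw [if_pos hcond, if_pos hcond]
      refine Finset.sum_congr rfl fun γ hγ => ?_
      rw [hagree]
      have h1 := mdeg_le_totalDegree hγ
      have h2 : g'.totalDegree ≤ 2 * halfCeil g'.totalDegree := by unfold halfCeil; omega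
      rw [mdeg_add, mdeg_add]
      omega
    · rw [if_neg hcond, if_neg hcond]
  have hTF : ∀ y ∈ F, T y ∈ F := by
    intro y hy
    rw [hF] at hy ⊢
    obtain ⟨h0, h1, h2, h3⟩ := hy
    refine ⟨?_, ?_, ?_, ?_⟩
    · rw [hagree y 0 (by rw [mdeg_zero']; omega)]; exact h0
    · rw [hlocT 1 (by omega) y]; exact h1
    · intro i; rw [hlocT (f i) (le_trans (hcdf i) hk) y]; exact h2 i
    · intro j; rw [hlocT (h j) (le_trans (hcdh j) hk) y]; exact h3 j
  have hobjT : ∀ y, obj (T y) = obj y := by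
    intro y
    rw [hobj, hobj]
    congr 1
    · refine Finset.sum_congr rfl fun β hβ => ?_
      have := mem_degLE.1 hβ
      rw [hagree y _ (by rw [mdeg_add]; omega)]
    · refine Finset.sum_congr rfl fun α hα => ?_
      have := mem_degLE.1 hα
      rw [hagree y _ (by omega)]
  -- trivial case d = 0
  rcases Nat.eq_zero_or_pos d with hd0 | hd1
  · obtain ⟨y₀, hy₀⟩ := hne
    have hconst : ∀ z ∈ F, obj z = 1 + ξ 0 := by
      intro z hz
      have hz0 : z 0 = 1 := by rw [hF] at hz; exact hz.1
      have hdeg0 : degLE n 0 = {0} := by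
        ext α
        rw [mem_degLE, Finset.mem_singleton]
        constructor
        · exact fun hα => mdeg_eq_zero (Nat.le_zero.1 hα)
        · rintro rfl; rw [mdeg_zero']
      rw [hobj, hd0]
      norm_num [hdeg0, hz0]
    exact ⟨y₀, hy₀, fun y hy => le_of_eq ((hconst y₀ hy₀).trans (hconst y hy).symm)⟩
  -- a₀ has degree at most 2d
  have ha₀deg : (a₀ * (1 : MvPolynomial (Fin n) ℝ)).totalDegree ≤ 2 * d := by
    rw [mul_one]
    have heq : a₀ = (C Rv - monVecSq n d) - (∑ i, a i * f i) - (∑ j, b j * h j) := by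
      rw [hcert]; ring
    rw [heq]
    refine le_trans (totalDegree_sub _ _) (max_le (le_trans (totalDegree_sub _ _)
      (max_le (le_trans (totalDegree_sub _ _) (max_le ?_ ?_)) ?_)) ?_)
    · rw [totalDegree_C]; omega
    · exact monVecSq_totalDegree d
    · exact totalDegree_finsetSum_le fun i _ => hda i
    · exact totalDegree_finsetSum_le fun j _ => hdb j
  -- the step inequality for every feasible point
  have hstep : ∀ y ∈ F, ∀ δ : Fin n →₀ ℕ, mdeg δ + d ≤ k →
      ∑ β ∈ degLE n d, y (β + β + (δ + δ)) ≤ Rv * y (δ + δ) := by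
    intro y hy δ hδ
    rw [hF] at hy
    obtain ⟨h0, h1, h2, h3⟩ := hy
    have hc := congrArg (fun P => Riesz y (monomial (δ + δ) (1:ℝ) * P)) hcert
    rw [cert_lhs] at hc
    have hrhs : 0 ≤ Riesz y (monomial (δ + δ) (1:ℝ) *
        (a₀ + ∑ i, a i * f i + ∑ j, b j * h j)) := by
      rw [mul_add, mul_add, Riesz_add, Riesz_add]
      have t1 : 0 ≤ Riesz y (monomial (δ + δ) (1:ℝ) * a₀) := by
        have := term_nonneg h1 ha₀ (d := d) (by omega) ha₀deg δ hδ
        rwa [mul_one] at this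
      have t2 : 0 ≤ Riesz y (monomial (δ + δ) (1:ℝ) * ∑ i, a i * f i) := by
        rw [Finset.mul_sum, Riesz_sum]
        exact Finset.sum_nonneg fun i _ => term_nonneg (h2 i) (ha i) (hcdf i) (hda i) δ hδ
      have t3 : 0 ≤ Riesz y (monomial (δ + δ) (1:ℝ) * ∑ j, b j * h j) := by
        rw [Finset.mul_sum, Riesz_sum]
        exact Finset.sum_nonneg fun j _ => term_nonneg (h3 j) (hb j) (hcdh j) (hdb j) δ hδ
      linarith
    linarith [hc ▸ hrhs]
  -- uniform bound on all feasible moments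
  set B := (max 1 Rv) ^ (k + 1) with hB
  have hB1 : (1:ℝ) ≤ B := one_le_pow₀ (le_max_left _ _)
  have hbound : ∀ y ∈ F, ∀ μ : Fin n →₀ ℕ, mdeg μ ≤ 2 * k → |y μ| ≤ B := by
    intro y hy
    have hy' := hy
    rw [hF] at hy'
    exact moment_bound hk hd1 hR hy'.1 hy'.2.1 (hstep y hy)
  -- the compact feasible core
  set G := F ∩ {y : (Fin n →₀ ℕ) → ℝ | ∀ μ : Fin n →₀ ℕ, ¬ mdeg μ ≤ 2 * k → y μ = 0}
    with hG
  have hTG : ∀ y ∈ F, T y ∈ G := fun y hy => ⟨hTF y hy, fun μ hμ => if_neg hμ⟩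
  obtain ⟨y₀, hy₀⟩ := hne
  have hGne : G.Nonempty := ⟨T y₀, hTG y₀ hy₀⟩
  -- closedness of the feasible set
  have hent : ∀ (g' : MvPolynomial (Fin n) ℝ) (α β : Fin n →₀ ℕ),
      Continuous fun y : (Fin n →₀ ℕ) → ℝ => locMat k g' y α β := by
    intro g' α β
    unfold locMat
    by_cases hcond : mdeg α ≤ k - halfCeil g'.totalDegree ∧
        mdeg β ≤ k - halfCeil g'.totalDegree
    · simp only [if_pos hcond]
      exact continuous_finset_sum _ fun γ _ => continuous_const.mul (continuous_apply (α + β + γ))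
    · simp only [if_neg hcond]
      exact continuous_const
  have hpsdcl : ∀ g' : MvPolynomial (Fin n) ℝ,
      IsClosed {y : (Fin n →₀ ℕ) → ℝ | IsPSD (locMat k g' y)} := by
    intro g'
    have hset : {y : (Fin n →₀ ℕ) → ℝ | IsPSD (locMat k g' y)} =
        (⋂ (α : Fin n →₀ ℕ) (β : Fin n →₀ ℕ),
          {y | locMat k g' y α β = locMat k g' y β α}) ∩
        ⋂ v : (Fin n →₀ ℕ) →₀ ℝ,
          {y | 0 ≤ ∑ α ∈ v.support, ∑ β ∈ v.support, v α * locMat k g' y α β * v β} := by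
      ext y
      simp only [Set.mem_setOf_eq, Set.mem_inter_iff, Set.mem_iInter, IsPSD]
      try tauto
    rw [hset]
    refine IsClosed.inter (isClosed_iInter fun α => isClosed_iInter fun β =>
      isClosed_eq (hent g' α β) (hent g' β α)) (isClosed_iInter fun v => ?_)
    refine isClosed_le continuous_const ?_
    exact continuous_finset_sum _ fun α _ => continuous_finset_sum _ fun β _ =>
      ((continuous_const.mul (hent g' α β)).mul continuous_const)
  have hFclosed : IsClosed F := by
    rw [hF]
    have hset : {y : (Fin n →₀ ℕ) → ℝ | y 0 = 1 ∧
        IsPSD (locMat k (1 : MvPolynomial (Fin n) ℝ) y) ∧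
        (∀ i, IsPSD (locMat k (f i) y)) ∧
        (∀ j, IsPSD (locMat k (h j) y))} =
        {y : (Fin n →₀ ℕ) → ℝ | y 0 = 1} ∩
        ({y | IsPSD (locMat k (1 : MvPolynomial (Fin n) ℝ) y)} ∩
         ((⋂ i, {y | IsPSD (locMat k (f i) y)}) ∩
          (⋂ j, {y | IsPSD (locMat k (h j) y)}))) := by
      ext y
      simp only [Set.mem_setOf_eq, Set.mem_inter_iff, Set.mem_iInter]
      try tauto
    rw [hset]
    exact (isClosed_eq (continuous_apply 0) continuous_const).inter
      ((hpsdcl 1).inter ((isClosed_iInter fun i => hpsdcl (f i)).inter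
        (isClosed_iInter fun j => hpsdcl (h j))))
  have hGclosed : IsClosed G := by
    rw [hG]
    refine hFclosed.inter ?_
    have hset : {y : (Fin n →₀ ℕ) → ℝ | ∀ μ : Fin n →₀ ℕ, ¬ mdeg μ ≤ 2 * k → y μ = 0} =
        ⋂ μ : Fin n →₀ ℕ, {y | ¬ mdeg μ ≤ 2 * k → y μ = 0} := by
      ext y; simp [Set.mem_iInter]
    rw [hset]
    refine isClosed_iInter fun μ => ?_
    by_cases hμ : mdeg μ ≤ 2 * k
    · have huniv : {y : (Fin n →₀ ℕ) → ℝ | ¬ mdeg μ ≤ 2 * k → y μ = 0} = Set.univ := by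
        ext y; simp [hμ]
      rw [huniv]
      exact isClosed_univ
    · simp only [hμ, not_false_eq_true, true_implies]
      exact isClosed_eq (continuous_apply μ) continuous_const
  have hGcompact : IsCompact G := by
    refine IsCompact.of_isClosed_subset
      (isCompact_univ_pi fun μ : Fin n →₀ ℕ => isCompact_Icc (a := -B) (b := B))
      hGclosed ?_
    intro y hyG
    rw [Set.mem_univ_pi]
    intro μ
    rw [Set.mem_Icc]
    by_cases hμ : mdeg μ ≤ 2 * k
    · exact abs_le.1 (hbound y hyG.1 μ hμ)
    · rw [hyG.2 μ hμ]
      constructor <;> linarith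
  have hobjcont : Continuous obj := by
    have : obj = fun y => (∑ β ∈ degLE n d, y (β + β)) +
        ∑ α ∈ degLE n (2 * d), ξ α * y α := funext hobj
    rw [this]
    have hc1 : Continuous fun y : (Fin n →₀ ℕ) → ℝ => ∑ β ∈ degLE n d, y (β + β) :=
      continuous_finset_sum _ fun β _ => continuous_apply _
    have hc2 : Continuous fun y : (Fin n →₀ ℕ) → ℝ => ∑ α ∈ degLE n (2 * d), ξ α * y α :=
      continuous_finset_sum _ fun α _ => continuous_const.mul (continuous_apply α)
    exact hc1.add hc2
  obtain ⟨ystar, hystarG, hmin⟩ := hGcompact.exists_isMinOn hGne hobjcont.continuousOn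
  refine ⟨ystar, hystarG.1, fun y hy => ?_⟩
  calc obj ystar ≤ obj (T y) := isMinOn_iff.1 hmin (T y) (hTG y hy)
    _ = obj y := hobjT y
end

section
/- The polynomial f(x₁,x₂,x₃) = x₁⁴ + x₂⁴ + x₃⁴ + 2x₁²x₂² + x₁²x₃² + x₂²x₃² − 4x₁ − 4x₂ − 4x₃ + 1 is convex on ℝ³; equivalently, its Hessian matrix ∇²f(x), whose entries are 12x₁²+4x₂²+2x₃², 8x₁x₂, 4x₁x₃ (first row), 8x₁x₂, 4x₁²+12x₂²+2x₃², 4x₂x₃ (second row), 4x₁x₃, 4x₂x₃, 2x₁²+2x₂²+12x₃² (third row), is positive semidefinite for every x ∈ ℝ³. -/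
private lemma sq_conv {f : (Fin 3 → ℝ) → ℝ} (hf : ConvexOn ℝ Set.univ f)
    (h0 : ∀ x, 0 ≤ f x) : ConvexOn ℝ Set.univ (fun x => f x ^ 2) := by
  refine ⟨convex_univ, ?_⟩
  intro x hx y hy a b ha hb hab
  have h1 := hf.2 hx hy ha hb hab
  have h2 : 0 ≤ f (a • x + b • y) := h0 _
  simp only [smul_eq_mul] at *
  nlinarith [sq_nonneg (f x - f y), mul_nonneg ha hb, h0 x, h0 y]

private lemma coord_sq (i : Fin 3) :
    ConvexOn ℝ Set.univ (fun x : Fin 3 → ℝ => x i ^ 2) := by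
  refine ⟨convex_univ, ?_⟩
  intro x _ y _ a b ha hb hab
  simp only [Pi.add_apply, Pi.smul_apply, smul_eq_mul]
  nlinarith [sq_nonneg (x i - y i), mul_nonneg ha hb]

private lemma lin_conv :
    ConvexOn ℝ Set.univ (fun x : Fin 3 → ℝ => -4 * x 0 - 4 * x 1 - 4 * x 2 + 1) := by
  refine ⟨convex_univ, ?_⟩
  intro x _ y _ a b _ _ hab
  simp only [Pi.add_apply, Pi.smul_apply, smul_eq_mul]
  nlinarith [hab]

/-- The polynomial
`f(x₁,x₂,x₃) = x₁⁴ + x₂⁴ + x₃⁴ + 2x₁²x₂² + x₁²x₃² + x₂²x₃² − 4x₁ − 4x₂ − 4x₃ + 1`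
is convex on `ℝ³`; equivalently, its Hessian matrix is positive semidefinite at every point. -/
theorem quartic_convex_hessian_psd :
    ConvexOn ℝ Set.univ (fun x : Fin 3 → ℝ =>
      x 0 ^ 4 + x 1 ^ 4 + x 2 ^ 4 + 2 * x 0 ^ 2 * x 1 ^ 2 + x 0 ^ 2 * x 2 ^ 2
        + x 1 ^ 2 * x 2 ^ 2 - 4 * x 0 - 4 * x 1 - 4 * x 2 + 1) ∧
    ∀ x₁ x₂ x₃ : ℝ,
      (!![12 * x₁ ^ 2 + 4 * x₂ ^ 2 + 2 * x₃ ^ 2, 8 * x₁ * x₂, 4 * x₁ * x₃;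
          8 * x₁ * x₂, 4 * x₁ ^ 2 + 12 * x₂ ^ 2 + 2 * x₃ ^ 2, 4 * x₂ * x₃;
          4 * x₁ * x₃, 4 * x₂ * x₃,
            2 * x₁ ^ 2 + 2 * x₂ ^ 2 + 12 * x₃ ^ 2] : Matrix (Fin 3) (Fin 3) ℝ).PosSemidef := by
  constructor
  · -- f = ½(x₀²+x₁²+x₂²)² + ½(x₀²+x₁²)² + ½(x₂²)² + (linear part)
    have hq : ConvexOn ℝ Set.univ (fun x : Fin 3 → ℝ => x 0 ^ 2 + x 1 ^ 2 + x 2 ^ 2) :=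
      ((coord_sq 0).add (coord_sq 1)).add (coord_sq 2)
    have hp : ConvexOn ℝ Set.univ (fun x : Fin 3 → ℝ => x 0 ^ 2 + x 1 ^ 2) :=
      (coord_sq 0).add (coord_sq 1)
    have hq2 := sq_conv hq (fun x => by positivity)
    have hp2 := sq_conv hp (fun x => by positivity)
    have hr2 := sq_conv (coord_sq 2) (fun x => by positivity)
    have hsum := (((hq2.smul (by norm_num : (0:ℝ) ≤ 1/2)).add
        (hp2.smul (by norm_num : (0:ℝ) ≤ 1/2))).add
        (hr2.smul (by norm_num : (0:ℝ) ≤ 1/2))).add lin_conv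
    have heq : (fun x : Fin 3 → ℝ =>
        x 0 ^ 4 + x 1 ^ 4 + x 2 ^ 4 + 2 * x 0 ^ 2 * x 1 ^ 2 + x 0 ^ 2 * x 2 ^ 2
          + x 1 ^ 2 * x 2 ^ 2 - 4 * x 0 - 4 * x 1 - 4 * x 2 + 1) =
        fun x : Fin 3 → ℝ =>
          ((1:ℝ)/2) • (x 0 ^ 2 + x 1 ^ 2 + x 2 ^ 2) ^ 2 + ((1:ℝ)/2) • (x 0 ^ 2 + x 1 ^ 2) ^ 2
            + ((1:ℝ)/2) • (x 2 ^ 2) ^ 2 + (-4 * x 0 - 4 * x 1 - 4 * x 2 + 1) := by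
      funext x
      simp only [smul_eq_mul]
      ring
    rw [heq]
    exact hsum
  · intro x₁ x₂ x₃
    rw [Matrix.posSemidef_iff_dotProduct_mulVec]
    constructor
    · ext i j
      fin_cases i <;> fin_cases j <;> rfl
    · intro v
      have hv : ∀ i : Fin 3, (star v) i = v i := fun i => rfl
      simp only [dotProduct, Matrix.mulVec, Fin.sum_univ_three, Matrix.of_apply,
        Matrix.cons_val', Matrix.cons_val_zero, Matrix.cons_val_one, Matrix.head_cons,
        Matrix.cons_val_two, Matrix.tail_cons,
        Matrix.empty_val', Matrix.cons_val_fin_one, Matrix.head_fin_const,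
        Pi.star_apply, star_trivial]
      nlinarith [sq_nonneg (x₁ * v 0 + x₂ * v 1), sq_nonneg (x₁ * v 0 + x₃ * v 2),
        sq_nonneg (x₂ * v 1 + x₃ * v 2), sq_nonneg (x₂ * v 0), sq_nonneg (x₃ * v 0),
        sq_nonneg (x₁ * v 1), sq_nonneg (x₃ * v 1), sq_nonneg (x₁ * v 2),
        sq_nonneg (x₂ * v 2), sq_nonneg (x₃ * v 2)]
end
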